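/- Let à be a real square matrix all of whose eigenvalues have strictly positive real part, and g a vector. Define ψ(t) = (e^{-Ãt})ᵀ g. Then the matrix F = ∫_0^∞ ψ(t) ψ(t)ᵀ dt is finite (the integral converges) and satisfies the Lyapunov equation Ãᵀ F + F Ã = g gᵀ. -/

import Mathlib

open Matrix NormedSpace Filter MeasureTheory

lemma decay_complex {d : ℕ} (B : Matrix (Fin d) (Fin d) ℂ)
    (hB : ∀ μ ∈ spectrum ℂ B, 0 < μ.re) :
    ∃ ε > 0, ∀ v : Fin d → ℂ, ∃ C, 0 ≤ C ∧ ∀ t : ℝ, 0 ≤ t →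
      ‖(NormedSpace.exp (-(t • B))) *ᵥ v‖ ≤ C * Real.exp (-ε * t) := by
  letI : SeminormedRing (Matrix (Fin d) (Fin d) ℂ) := Matrix.linftyOpSemiNormedRing
  letI : NormedRing (Matrix (Fin d) (Fin d) ℂ) := Matrix.linftyOpNormedRing
  letI : NormedAlgebra ℂ (Matrix (Fin d) (Fin d) ℂ) := Matrix.linftyOpNormedAlgebra
  rcases Nat.eq_zero_or_pos d with hd | hd
  · subst hd
    refine ⟨1, one_pos, fun v => ⟨0, le_rfl, fun t ht => ?_⟩⟩
    have : (NormedSpace.exp (-(t • B))) *ᵥ v = 0 := Subsingleton.elim _ _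
    simp [this]
  · haveI : NeZero d := ⟨hd.ne'⟩
    haveI : Nontrivial (Matrix (Fin d) (Fin d) ℂ) := by
      refine ⟨1, 0, fun h => ?_⟩
      have := congrFun (congrFun h ⟨0, hd⟩) ⟨0, hd⟩
      simp [Matrix.one_apply] at this
    have hSne : (spectrum ℂ B).Nonempty := spectrum.nonempty B
    obtain ⟨μ₀, hμ₀, hmin⟩ :=
      (spectrum.isCompact B).exists_isMinOn hSne Complex.continuous_re.continuousOn
    set ε := μ₀.re / 2 with hεdef
    have hε0 : 0 < ε := half_pos (hB μ₀ hμ₀)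
    refine ⟨ε, hε0, ?_⟩
    set p : Submodule ℂ (Fin d → ℂ) :=
      { carrier := {v | ∃ C, 0 ≤ C ∧ ∀ t : ℝ, 0 ≤ t →
          ‖(NormedSpace.exp (-(t • B))) *ᵥ v‖ ≤ C * Real.exp (-ε * t)}
        add_mem' := by
          rintro x y ⟨Cx, hCx0, hCx⟩ ⟨Cy, hCy0, hCy⟩
          refine ⟨Cx + Cy, by linarith, fun t ht => ?_⟩
          rw [Matrix.mulVec_add]
          calc ‖_ + _‖ ≤ _ + _ := norm_add_le _ _
            _ ≤ Cx * Real.exp (-ε * t) + Cy * Real.exp (-ε * t) :=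
                add_le_add (hCx t ht) (hCy t ht)
            _ = (Cx + Cy) * Real.exp (-ε * t) := by ring
        zero_mem' := ⟨0, le_rfl, fun t ht => by simp [Matrix.mulVec_zero]⟩
        smul_mem' := by
          rintro c x ⟨Cx, hCx0, hCx⟩
          refine ⟨‖c‖ * Cx, by positivity, fun t ht => ?_⟩
          rw [Matrix.mulVec_smul, norm_smul, mul_assoc]
          exact mul_le_mul_of_nonneg_left (hCx t ht) (norm_nonneg c) } with hp
    intro v
    suffices h : v ∈ p by exact h
    have htop : ⊤ ≤ p := by
      rw [← Module.End.iSup_maxGenEigenspace_eq_top (Matrix.toLinAlgEquiv' B)]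
      apply iSup_le
      intro μ
      rcases eq_or_ne (Module.End.maxGenEigenspace (Matrix.toLinAlgEquiv' B) μ) ⊥ with hbot | hne
      · rw [hbot]; exact bot_le
      · have hμspec : μ ∈ spectrum ℂ B := by
          have hne' : Module.End.genEigenspace (Matrix.toLinAlgEquiv' B) μ (Module.finrank ℂ (Fin d → ℂ)) ≠ ⊥ := by
            rw [← Module.End.maxGenEigenspace_eq_genEigenspace_finrank]; exact hne
          have h1 : Module.End.HasEigenvalue (Matrix.toLinAlgEquiv' B) μ :=
            Module.End.hasEigenvalue_of_hasGenEigenvalue (k := Module.finrank ℂ (Fin d → ℂ)) hne'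
          have := h1.mem_spectrum
          rwa [AlgEquiv.spectrum_eq] at this
        have hμre : ε < μ.re := by
          have h2 := isMinOn_iff.mp hmin μ hμspec
          have := hB μ₀ hμ₀
          rw [hεdef]; linarith
        intro v hv
        rw [Module.End.mem_maxGenEigenspace] at hv
        obtain ⟨k, hk⟩ := hv
        set N : Matrix (Fin d) (Fin d) ℂ := B - μ • 1 with hNdef
        have hNk : N ^ k *ᵥ v = 0 := by
          have heq : ((Matrix.toLinAlgEquiv' B) - μ • 1) ^ k
              = Matrix.toLinAlgEquiv' (N ^ k) := by
            rw [map_pow, map_sub, _root_.map_smul, _root_.map_one]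
          rw [← Matrix.toLinAlgEquiv'_apply, ← heq]
          exact hk
        have hNm : ∀ m, k ≤ m → N ^ m *ᵥ v = 0 := by
          intro m hm
          obtain ⟨r, rfl⟩ := Nat.exists_eq_add_of_le hm
          rw [add_comm, pow_add, ← Matrix.mulVec_mulVec, hNk, Matrix.mulVec_zero]
        set δ := μ.re - ε with hδdef
        have hδ0 : 0 < δ := sub_pos.mpr hμre
        refine ⟨∑ n ∈ Finset.range k, ‖N ^ n *ᵥ v‖ / δ ^ n, by positivity, fun t ht => ?_⟩
        -- split the exponential
        have hsmul : (t : ℝ) • B = (t : ℂ) • B := by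
          ext i j; simp [Matrix.smul_apply, Complex.real_smul]
        have hsplit : -(t • B) = ((-((t:ℂ) * μ)) • (1 : Matrix (Fin d) (Fin d) ℂ))
            + (-((t:ℂ) • N)) := by
          rw [hsmul, hNdef]
          rw [smul_sub, smul_smul, neg_smul]
          abel
        have hcomm : Commute ((-((t:ℂ) * μ)) • (1 : Matrix (Fin d) (Fin d) ℂ))
            (-((t:ℂ) • N)) := (Commute.one_left _).smul_left _
        have halg : exp ((-((t:ℂ) * μ)) • (1 : Matrix (Fin d) (Fin d) ℂ))
            = Complex.exp (-((t:ℂ) * μ)) • (1 : Matrix (Fin d) (Fin d) ℂ) := by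
          rw [Algebra.smul_def, mul_one]
          refine (algebraMap_exp_comm (-((t:ℂ) * μ))).symm.trans ?_
          rw [Algebra.smul_def, mul_one, Complex.exp_eq_exp_ℂ]
        have hexp : exp (-(t • B))
            = Complex.exp (-((t:ℂ) * μ)) • exp (-((t:ℂ) • N)) := by
          rw [hsplit, Matrix.exp_add_of_commute _ _ hcomm, halg, smul_mul_assoc, one_mul]
        have hser : exp (-((t:ℂ) • N)) *ᵥ v
            = ∑ n ∈ Finset.range k, (((n.factorial : ℂ))⁻¹ * (-(t:ℂ)) ^ n) • (N ^ n *ᵥ v) := by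
          have hterm : ∀ n : ℕ, (((n.factorial : ℂ))⁻¹ • (-((t:ℂ) • N)) ^ n) *ᵥ v
              = (((n.factorial : ℂ))⁻¹ * (-(t:ℂ)) ^ n) • (N ^ n *ᵥ v) := by
            intro n
            rw [← neg_smul, smul_pow, Matrix.smul_mulVec, Matrix.smul_mulVec,
              smul_smul]
          let L : Matrix (Fin d) (Fin d) ℂ →ₗ[ℂ] (Fin d → ℂ) :=
            { toFun := fun X => X *ᵥ v
              map_add' := fun X Y => Matrix.add_mulVec X Y v
              map_smul' := fun a X => Matrix.smul_mulVec a X v }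
          have hL : Continuous L := L.continuous_of_finiteDimensional
          have hmap := ContinuousLinearMap.map_tsum (M₂ := Fin d → ℂ)
            ⟨L, hL⟩ (expSeries_summable' (𝕂 := ℂ) (-((t:ℂ) • N)))
          have hexp2 : exp (-((t:ℂ) • N)) *ᵥ v
              = ∑' n : ℕ, (((n.factorial : ℂ))⁻¹ • (-((t:ℂ) • N)) ^ n) *ᵥ v := by
            rw [exp_eq_tsum (𝕂 := ℂ)]
            exact hmap
          rw [hexp2, tsum_eq_sum (s := Finset.range k) ?_]
          · exact Finset.sum_congr rfl fun n _ => hterm n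
          · intro n hn
            rw [hterm n, hNm n (Nat.le_of_not_lt (by simpa [Finset.mem_range] using hn))]
            simp
        have habs : ‖Complex.exp (-((t:ℂ) * μ))‖ = Real.exp (-(μ.re * t)) := by
          rw [Complex.norm_exp]
          congr 1
          simp [Complex.mul_re]
          ring
        have hbound1 : ‖exp (-((t:ℂ) • N)) *ᵥ v‖
            ≤ ∑ n ∈ Finset.range k, t ^ n / n.factorial * ‖N ^ n *ᵥ v‖ := by
          rw [hser]
          refine (norm_sum_le _ _).trans (Finset.sum_le_sum fun n _ => ?_)
          rw [norm_smul, norm_mul, norm_pow, norm_neg, norm_inv]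
          apply le_of_eq
          simp only [Complex.norm_natCast, Complex.norm_real, Real.norm_eq_abs,
            abs_of_nonneg ht]
          rw [div_eq_mul_inv]
          ring
        have hfact : ∀ n : ℕ, t ^ n / n.factorial ≤ Real.exp (δ * t) / δ ^ n := by
          intro n
          have h1 : (δ * t) ^ n / n.factorial ≤ Real.exp (δ * t) := by
            refine le_trans ?_ (Real.sum_le_exp_of_nonneg (by positivity) (n + 1))
            exact Finset.single_le_sum (f := fun i => (δ*t)^i / i.factorial)
              (fun i _ => by positivity) (Finset.self_mem_range_succ n)
          have h2 : t ^ n / n.factorial = ((δ*t)^n / n.factorial) / δ ^ n := by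
            rw [mul_pow]
            field_simp
          rw [h2]
          gcongr
        have hterm2 : Real.exp (-(μ.re*t)) * Real.exp (δ*t) = Real.exp (-ε*t) := by
          rw [← Real.exp_add]
          congr 1
          rw [hδdef]
          ring
        calc ‖exp (-(t • B)) *ᵥ v‖
            = ‖Complex.exp (-((t:ℂ) * μ))‖ * ‖exp (-((t:ℂ) • N)) *ᵥ v‖ := by
              rw [hexp, Matrix.smul_mulVec, norm_smul]
          _ ≤ Real.exp (-(μ.re * t)) * ∑ n ∈ Finset.range k,
              t ^ n / n.factorial * ‖N ^ n *ᵥ v‖ := by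
              rw [habs]
              exact mul_le_mul_of_nonneg_left hbound1 (Real.exp_nonneg _)
          _ ≤ Real.exp (-(μ.re * t)) * ∑ n ∈ Finset.range k,
              Real.exp (δ * t) / δ ^ n * ‖N ^ n *ᵥ v‖ := by
              exact mul_le_mul_of_nonneg_left (Finset.sum_le_sum fun n _ =>
                mul_le_mul_of_nonneg_right (hfact n) (norm_nonneg _)) (Real.exp_nonneg _)
          _ = (∑ n ∈ Finset.range k, ‖N ^ n *ᵥ v‖ / δ ^ n) * Real.exp (-ε * t) := by
              rw [Finset.mul_sum, Finset.sum_mul]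
              refine Finset.sum_congr rfl fun n _ => ?_
              calc Real.exp (-(μ.re*t)) * (Real.exp (δ * t) / δ ^ n * ‖N ^ n *ᵥ v‖)
                  = (Real.exp (-(μ.re*t)) * Real.exp (δ*t)) * (‖N ^ n *ᵥ v‖ / δ ^ n) := by
                    ring
                _ = ‖N ^ n *ᵥ v‖ / δ ^ n * Real.exp (-ε * t) := by
                    rw [hterm2]
                    ring
    exact htop Submodule.mem_top
lemma spectrum_transpose {d : ℕ} (M : Matrix (Fin d) (Fin d) ℂ) :
    spectrum ℂ Mᵀ = spectrum ℂ M := by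
  ext μ
  simp only [spectrum.mem_iff, not_iff_not]
  have key : ∀ X : Matrix (Fin d) (Fin d) ℂ, IsUnit Xᵀ ↔ IsUnit X := by
    intro X
    rw [Matrix.isUnit_iff_isUnit_det, Matrix.isUnit_iff_isUnit_det, Matrix.det_transpose]
  have h : μ • (1 : Matrix (Fin d) (Fin d) ℂ) - Mᵀ = (μ • 1 - M)ᵀ := by
    rw [Matrix.transpose_sub, Matrix.transpose_smul, Matrix.transpose_one]
  simp only [Algebra.algebraMap_eq_smul_one]
  rw [h, key]

lemma decay_real {d : ℕ} (A : Matrix (Fin d) (Fin d) ℝ)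
    (hA : ∀ μ ∈ spectrum ℂ (A.map (Complex.ofReal)), 0 < μ.re) (g : Fin d → ℝ) :
    ∃ ε > 0, ∃ C, 0 ≤ C ∧ ∀ t : ℝ, 0 ≤ t → ∀ i,
      |((NormedSpace.exp (-(t • A)))ᵀ *ᵥ g) i| ≤ C * Real.exp (-ε * t) := by
  letI : SeminormedRing (Matrix (Fin d) (Fin d) ℝ) := Matrix.linftyOpSemiNormedRing
  letI : NormedRing (Matrix (Fin d) (Fin d) ℝ) := Matrix.linftyOpNormedRing
  letI : NormedAlgebra ℝ (Matrix (Fin d) (Fin d) ℝ) := Matrix.linftyOpNormedAlgebra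
  letI : SeminormedRing (Matrix (Fin d) (Fin d) ℂ) := Matrix.linftyOpSemiNormedRing
  letI : NormedRing (Matrix (Fin d) (Fin d) ℂ) := Matrix.linftyOpNormedRing
  letI : NormedAlgebra ℝ (Matrix (Fin d) (Fin d) ℂ) := Matrix.linftyOpNormedAlgebra
  letI : NormedAlgebra ℂ (Matrix (Fin d) (Fin d) ℂ) := Matrix.linftyOpNormedAlgebra
  set B' : Matrix (Fin d) (Fin d) ℂ := Aᵀ.map Complex.ofReal with hB'def
  have hB' : ∀ μ ∈ spectrum ℂ B', 0 < μ.re := by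
    intro μ hμ
    apply hA
    rwa [hB'def, show (Aᵀ.map Complex.ofReal) = (A.map Complex.ofReal)ᵀ from rfl,
      spectrum_transpose] at hμ
  obtain ⟨ε, hε, hdec⟩ := decay_complex B' hB'
  obtain ⟨C, hC0, hC⟩ := hdec (fun i => (g i : ℂ))
  refine ⟨ε, hε, C, hC0, fun t ht i => ?_⟩
  have h1 : (NormedSpace.exp (-(t • A)))ᵀ = NormedSpace.exp (-(t • Aᵀ)) := by
    rw [← Matrix.exp_transpose]
    congr 1
  have h2 : (NormedSpace.exp (-(t • Aᵀ))).map Complex.ofReal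
      = NormedSpace.exp (-(t • B')) := by
    set φ : Matrix (Fin d) (Fin d) ℝ →ₐ[ℝ] Matrix (Fin d) (Fin d) ℂ :=
      Complex.ofRealAm.mapMatrix with hφdef
    have hφeq : ⇑φ = fun M : Matrix (Fin d) (Fin d) ℝ => M.map Complex.ofReal := by
      funext M
      simp [hφdef, AlgHom.mapMatrix_apply]
    have hφc : Continuous φ := by
      rw [hφeq]
      exact Continuous.matrix_map continuous_id Complex.continuous_ofReal
    letI : NormedAlgebra ℚ (Matrix (Fin d) (Fin d) ℝ) := NormedAlgebra.restrictScalars ℚ ℝ _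
    have hme := map_exp φ hφc (-(t • Aᵀ))
    rw [hφeq] at hme
    simp only at hme
    have h3 : (-(t • Aᵀ)).map Complex.ofReal = -(t • B') := by
      ext i j
      simp [hB'def]
    rw [h3] at hme
    exact hme
  have h4 : NormedSpace.exp (-(t • B')) *ᵥ (fun i => (g i : ℂ))
      = fun i => (((NormedSpace.exp (-(t • Aᵀ))) *ᵥ g) i : ℂ) := by
    rw [← h2]
    funext i
    simp [Matrix.mulVec, dotProduct, Matrix.map_apply]
  have h5 := hC t ht
  rw [h4] at h5
  have h6 : |((NormedSpace.exp (-(t • Aᵀ))) *ᵥ g) i|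
      ≤ ‖fun i => (((NormedSpace.exp (-(t • Aᵀ))) *ᵥ g) i : ℂ)‖ := by
    have := norm_le_pi_norm (fun i => (((NormedSpace.exp (-(t • Aᵀ))) *ᵥ g) i : ℂ)) i
    simpa [Complex.norm_real] using this
  rw [h1]
  exact h6.trans h5
/-- If all eigenvalues of `Ã` have strictly positive real part and
`ψ(t) = (e^{-Ãt})ᵀ g`, then the integral `F = ∫_0^∞ ψ(t)ψ(t)ᵀ dt` converges
(entrywise) and solves the Lyapunov equation `Ãᵀ F + F Ã = g gᵀ`. -/
theorem lyapunov_integral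
    (d : ℕ) (A : Matrix (Fin d) (Fin d) ℝ)
    (hA : ∀ μ ∈ spectrum ℂ (A.map (Complex.ofReal)), 0 < μ.re)
    (g : Fin d → ℝ)
    (psi : ℝ → Fin d → ℝ)
    (hpsi : ∀ t, psi t = (NormedSpace.exp (-(t • A)))ᵀ.mulVec g)
    (F : Matrix (Fin d) (Fin d) ℝ)
    (hF : ∀ i j, F i j = ∫ t in Set.Ioi (0 : ℝ), psi t i * psi t j) :
    (∀ i j, MeasureTheory.IntegrableOn (fun t => psi t i * psi t j) (Set.Ioi (0 : ℝ))) ∧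
    Aᵀ * F + F * A = Matrix.vecMulVec g g := by
  letI : SeminormedRing (Matrix (Fin d) (Fin d) ℝ) := Matrix.linftyOpSemiNormedRing
  letI : NormedRing (Matrix (Fin d) (Fin d) ℝ) := Matrix.linftyOpNormedRing
  letI : NormedAlgebra ℝ (Matrix (Fin d) (Fin d) ℝ) := Matrix.linftyOpNormedAlgebra
  obtain ⟨ε, hε, C, hC0, hdec⟩ := decay_real A hA g
  have hψb : ∀ t : ℝ, 0 ≤ t → ∀ i, |psi t i| ≤ C * Real.exp (-ε * t) := by
    intro t ht i
    rw [hpsi]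
    exact hdec t ht i
  -- pointwise description of psi
  have hψeq : ∀ (t : ℝ) (i : Fin d),
      psi t i = ∑ k, NormedSpace.exp (t • (-A)) k i * g k := by
    intro t i
    rw [hpsi, smul_neg]
    simp [Matrix.mulVec, dotProduct]
  -- derivative of matrix exponential and of psi
  have hEd : ∀ t : ℝ, HasDerivAt (fun s : ℝ => NormedSpace.exp (s • (-A)))
      (NormedSpace.exp (t • (-A)) * (-A)) t := fun t => hasDerivAt_exp_smul_const (-A) t
  have hEde : ∀ (k i : Fin d) (t : ℝ),
      HasDerivAt (fun s : ℝ => NormedSpace.exp (s • (-A)) k i)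
        ((NormedSpace.exp (t • (-A)) * (-A)) k i) t := by
    intro k i t
    let l : Matrix (Fin d) (Fin d) ℝ →ₗ[ℝ] ℝ :=
      { toFun := fun M => M k i
        map_add' := fun _ _ => rfl
        map_smul' := fun _ _ => rfl }
    exact (l.toContinuousLinearMap.hasFDerivAt).comp_hasDerivAt t (hEd t)
  have hψd : ∀ (i : Fin d) (t : ℝ), HasDerivAt (fun s => psi s i)
      (-(∑ m, A m i * psi t m)) t := by
    intro i t
    have hfun : (fun s => psi s i)
        = fun s => ∑ k, NormedSpace.exp (s • (-A)) k i * g k :=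
      funext fun s => hψeq s i
    rw [hfun]
    have hd := HasDerivAt.fun_sum
      (u := Finset.univ) (fun k _ => ((hEde k i t).mul_const (g k)))
    refine hd.congr_deriv (Eq.symm ?_)
    simp only [Matrix.mul_apply, Matrix.neg_apply, hψeq t]
    have expand : ∀ x, (∑ x1, NormedSpace.exp (t • -A) x x1 * -A x1 i) * g x
        = ∑ x1, -(A x1 i * (NormedSpace.exp (t • -A) x x1 * g x)) := by
      intro x
      rw [Finset.sum_mul]
      exact Finset.sum_congr rfl fun x1 _ => by ring
    have expand2 : ∀ x, -(A x i * ∑ k, NormedSpace.exp (t • -A) k x * g k)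
        = ∑ k, -(A x i * (NormedSpace.exp (t • -A) k x * g k)) := by
      intro x
      rw [Finset.mul_sum, ← Finset.sum_neg_distrib]
    simp only [expand, expand2]
    rw [Finset.sum_comm]
    rw [← Finset.sum_neg_distrib]
    exact Finset.sum_congr rfl fun y _ => expand2 y
  have hψc : ∀ i, Continuous fun t => psi t i := fun i =>
    continuous_iff_continuousAt.mpr fun t => (hψd i t).continuousAt
  have hexpsq : ∀ t : ℝ, Real.exp (-ε * t) * Real.exp (-ε * t) = Real.exp (-(2 * ε) * t) := by
    intro t
    rw [← Real.exp_add]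
    congr 1
    ring
  have hbnd : ∀ t : ℝ, 0 ≤ t → ∀ i j,
      ‖psi t i * psi t j‖ ≤ C * C * Real.exp (-(2 * ε) * t) := by
    intro t ht i j
    calc ‖psi t i * psi t j‖ = |psi t i| * |psi t j| := by
          rw [Real.norm_eq_abs, abs_mul]
      _ ≤ (C * Real.exp (-ε * t)) * (C * Real.exp (-ε * t)) :=
          mul_le_mul (hψb t ht i) (hψb t ht j) (abs_nonneg _) (by positivity)
      _ = C * C * (Real.exp (-ε * t) * Real.exp (-ε * t)) := by ring
      _ = C * C * Real.exp (-(2 * ε) * t) := by rw [hexpsq t]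
  have hint : ∀ i j, MeasureTheory.IntegrableOn
      (fun t => psi t i * psi t j) (Set.Ioi (0 : ℝ)) := by
    intro i j
    have hg : MeasureTheory.IntegrableOn
        (fun t => C * C * Real.exp (-(2 * ε) * t)) (Set.Ioi (0 : ℝ)) :=
      (exp_neg_integrableOn_Ioi 0 (by positivity)).const_mul (C * C)
    refine MeasureTheory.Integrable.mono' hg
      (((hψc i).mul (hψc j)).aestronglyMeasurable) ?_
    rw [MeasureTheory.ae_restrict_iff' measurableSet_Ioi]
    exact MeasureTheory.ae_of_all _ fun t ht => hbnd t (le_of_lt ht) i j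
  refine ⟨hint, ?_⟩
  have htend : ∀ i j, Filter.Tendsto (fun t => psi t i * psi t j)
      Filter.atTop (nhds 0) := by
    intro i j
    have h1 : Filter.Tendsto (fun t : ℝ => (2 * ε) * t) Filter.atTop Filter.atTop :=
      Filter.Tendsto.const_mul_atTop (by positivity) Filter.tendsto_id
    have h3 : Filter.Tendsto (fun t : ℝ => -(2 * ε) * t) Filter.atTop Filter.atBot := by
      simp only [neg_mul]
      exact Filter.tendsto_neg_atBot_iff.mpr h1
    have h2 : Filter.Tendsto (fun t : ℝ => Real.exp (-(2 * ε) * t))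
        Filter.atTop (nhds 0) := Real.tendsto_exp_atBot.comp h3
    have hb : Filter.Tendsto (fun t : ℝ => C * C * Real.exp (-(2 * ε) * t))
        Filter.atTop (nhds 0) := by
      have := h2.const_mul (C * C)
      simpa using this
    refine squeeze_zero_norm' ?_ hb
    filter_upwards [Filter.eventually_ge_atTop (0 : ℝ)] with t ht
    exact hbnd t ht i j
  have key : ∀ i j, (∫ t in Set.Ioi (0:ℝ),
      ((∑ m, A m i * (psi t m * psi t j)) + (∑ m, A m j * (psi t i * psi t m))))
      = g i * g j := by
    intro i j
    have hDint : MeasureTheory.IntegrableOn (fun t =>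
        (∑ m, A m i * (psi t m * psi t j)) + (∑ m, A m j * (psi t i * psi t m)))
        (Set.Ioi (0 : ℝ)) :=
      (MeasureTheory.integrable_finset_sum _ fun m _ =>
        (hint m j).const_mul _).add
      (MeasureTheory.integrable_finset_sum _ fun m _ => (hint i m).const_mul _)
    have hhd : ∀ t : ℝ, HasDerivAt (fun s => psi s i * psi s j)
        (-((∑ m, A m i * (psi t m * psi t j)) + (∑ m, A m j * (psi t i * psi t m)))) t := by
      intro t
      have hmul := (hψd i t).fun_mul (hψd j t)
      refine hmul.congr_deriv (Eq.symm ?_)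
      rw [neg_mul, mul_neg, ← neg_add, Finset.sum_mul, Finset.mul_sum]
      congr 1
      congr 1
      · exact Finset.sum_congr rfl fun m _ => by ring
      · exact Finset.sum_congr rfl fun m _ => by ring
    have hcw : ContinuousWithinAt (fun s => psi s i * psi s j) (Set.Ici 0) 0 :=
      ((hψc i).mul (hψc j)).continuousWithinAt
    have hftc := MeasureTheory.integral_Ioi_of_hasDerivAt_of_tendsto hcw
      (fun x _ => hhd x) hDint.neg (htend i j)
    rw [MeasureTheory.integral_neg] at hftc
    have hψ0 : psi 0 = g := by
      rw [hpsi]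
      simp
    have hψ00 : psi 0 i * psi 0 j = g i * g j := by rw [hψ0]
    rw [hψ00] at hftc
    linarith
  ext i j
  rw [Matrix.add_apply, Matrix.mul_apply, Matrix.mul_apply, Matrix.vecMulVec_apply]
  have e1 : ∑ m, Aᵀ i m * F m j
      = ∫ t in Set.Ioi (0:ℝ), ∑ m, A m i * (psi t m * psi t j) := by
    rw [MeasureTheory.integral_finset_sum _ fun m _ => (hint m j).const_mul _]
    refine Finset.sum_congr rfl fun m _ => ?_
    rw [Matrix.transpose_apply, hF m j, MeasureTheory.integral_const_mul]
  have e2 : ∑ m, F i m * A m j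
      = ∫ t in Set.Ioi (0:ℝ), ∑ m, A m j * (psi t i * psi t m) := by
    rw [MeasureTheory.integral_finset_sum _ fun m _ => (hint i m).const_mul _]
    refine Finset.sum_congr rfl fun m _ => ?_
    rw [hF i m, MeasureTheory.integral_const_mul, mul_comm]
  rw [e1, e2, ← MeasureTheory.integral_add
    (MeasureTheory.integrable_finset_sum _ fun m _ => (hint m j).const_mul _)
    (MeasureTheory.integrable_finset_sum _ fun m _ => (hint i m).const_mul _)]
  exact key i j
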